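/- If q_x(D) = 0 and q_x(D') = 1 for neighbouring datasets D, D', then the outputs a_x(D) (identically 0) and a_x(D') (the thresholded Laplace-perturbed count) are (0, δ/2)-indistinguishable: for every set S, P(a_x(D) ∈ S) ≤ P(a_x(D') ∈ S) + δ/2 and P(a_x(D') ∈ S) ≤ P(a_x(D) ∈ S) + δ/2. -/

import Mathlib

open MeasureTheory Set Real

/-- The Laplace distribution with mean 0 and scale `b`. -/
noncomputable def laplace (b : ℝ) : Measure ℝ :=
  volume.withDensity (fun x => ENNReal.ofReal (1 / (2 * b) * Real.exp (-|x| / b)))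

lemma integrableOn_lapdens_Ioi {b : ℝ} (hb : 0 < b) {a : ℝ} (ha : 0 ≤ a) :
    IntegrableOn (fun x => Real.exp (-|x| / b)) (Set.Ioi a) := by
  refine ((exp_neg_integrableOn_Ioi a (inv_pos.mpr hb)).congr_fun ?_ measurableSet_Ioi)
  intro x hx
  have hx0 : (0:ℝ) ≤ x := le_trans ha (le_of_lt hx)
  have h : -b⁻¹ * x = -|x| / b := by rw [abs_of_nonneg hx0]; ring
  simp only [h]

lemma integrable_lapdens {b : ℝ} (hb : 0 < b) :
    Integrable (fun x => Real.exp (-|x| / b)) := by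
  rw [← integrableOn_univ, ← Set.Iic_union_Ioi (a := (0:ℝ))]
  refine IntegrableOn.union ?_ (integrableOn_lapdens_Ioi hb le_rfl)
  have m : MeasurableEmbedding fun x : ℝ => -x := (Homeomorph.neg ℝ).measurableEmbedding
  rw [← Measure.map_neg_eq_self (volume : Measure ℝ), m.integrableOn_map_iff]
  simp_rw [Function.comp_def, abs_neg, neg_preimage, neg_Iic, neg_zero]
  exact Iff.mpr integrableOn_Ici_iff_integrableOn_Ioi (integrableOn_lapdens_Ioi hb le_rfl)

lemma laplace_Ici {b : ℝ} (hb : 0 < b) {a : ℝ} (ha : 0 ≤ a) :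
    laplace b (Set.Ici a) = ENNReal.ofReal (1 / 2 * Real.exp (-a / b)) := by
  rw [laplace, withDensity_apply _ measurableSet_Ici]
  have hint : IntegrableOn (fun x => 1 / (2 * b) * Real.exp (-|x| / b)) (Set.Ici a) := by
    exact (Iff.mpr integrableOn_Ici_iff_integrableOn_Ioi
      (integrableOn_lapdens_Ioi hb ha)).const_mul _
  rw [← ofReal_integral_eq_lintegral_ofReal hint
    (Filter.Eventually.of_forall fun x => by positivity)]
  congr 1
  rw [integral_const_mul]
  have h1 : ∫ x in Set.Ici a, Real.exp (-|x| / b) = ∫ x in Set.Ioi a, Real.exp (-(b⁻¹ * x)) := by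
    rw [integral_Ici_eq_integral_Ioi]
    refine setIntegral_congr_fun measurableSet_Ioi fun x hx => ?_
    have hx0 : (0:ℝ) ≤ x := le_trans ha (le_of_lt hx)
    have h : -|x| / b = -(b⁻¹ * x) := by rw [abs_of_nonneg hx0]; ring
    simp only [h]
  rw [h1, integral_comp_mul_left_Ioi (fun y => Real.exp (-y)) a (inv_pos.mpr hb),
    integral_exp_neg_Ioi]
  rw [smul_eq_mul, inv_inv]
  rw [show -(b⁻¹ * a) = -a / b by ring]
  field_simp

lemma laplace_univ {b : ℝ} (hb : 0 < b) : laplace b Set.univ = 1 := by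
  rw [laplace, withDensity_apply _ MeasurableSet.univ, Measure.restrict_univ]
  rw [← ofReal_integral_eq_lintegral_ofReal ((integrable_lapdens hb).const_mul _)
    (Filter.Eventually.of_forall fun x => by positivity)]
  rw [integral_const_mul]
  have : ∫ x : ℝ, Real.exp (-|x| / b) = 2 * ∫ x in Set.Ioi (0:ℝ), Real.exp (-x / b) := by
    exact integral_comp_abs (f := fun y => Real.exp (-y / b))
  rw [this]
  have h2 : ∫ x in Set.Ioi (0:ℝ), Real.exp (-x / b)
      = ∫ x in Set.Ioi (0:ℝ), Real.exp (-(b⁻¹ * x)) := by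
    refine setIntegral_congr_fun measurableSet_Ioi fun x hx => ?_
    have h : -x / b = -(b⁻¹ * x) := by ring
    simp only [h]
  rw [h2, integral_comp_mul_left_Ioi (fun y => Real.exp (-y)) 0 (inv_pos.mpr hb),
    mul_zero, integral_exp_neg_Ioi_zero, smul_eq_mul, inv_inv, mul_one]
  rw [show 1 / (2 * b) * (2 * b) = 1 by field_simp]
  exact ENNReal.ofReal_one

/-- If `q_x(D) = 0` and `q_x(D') = 1`, then the outputs `a_x(D)` (identically `0`) and
`a_x(D')` (the thresholded Laplace-perturbed count `1 + Lap(2/ε)`, zeroed out below the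
threshold `2·ln(2/δ)/ε + 1`) are `(0, δ/2)`-indistinguishable. -/
theorem sbh_zero_one_indist (ε δ : ℝ) (hε : 0 < ε) (hδ : δ ∈ Set.Ioo (0 : ℝ) 1)
    (S : Set ℝ) (hS : MeasurableSet S) :
    (Measure.dirac (0 : ℝ)) S ≤
        (laplace (2 / ε)).map
          (fun z => if 2 * Real.log (2 / δ) / ε + 1 ≤ 1 + z then 1 + z else 0) S
        + ENNReal.ofReal (δ / 2) ∧
      (laplace (2 / ε)).map
          (fun z => if 2 * Real.log (2 / δ) / ε + 1 ≤ 1 + z then 1 + z else 0) S ≤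
        (Measure.dirac (0 : ℝ)) S + ENNReal.ofReal (δ / 2) := by
  obtain ⟨hδ0, hδ1⟩ := hδ
  set T := 2 * Real.log (2 / δ) / ε with hTdef
  have hb : (0:ℝ) < 2 / ε := by positivity
  have hlog : 0 < Real.log (2 / δ) := Real.log_pos (by rw [lt_div_iff₀ hδ0]; linarith)
  have hT0 : 0 ≤ T := by positivity
  have hf : Measurable (fun z : ℝ => if T + 1 ≤ 1 + z then 1 + z else 0) := by
    refine Measurable.ite ?_ (measurable_const.add measurable_id) measurable_const
    exact measurableSet_le measurable_const (measurable_const.add measurable_id)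
  have hIci : laplace (2 / ε) (Set.Ici T) = ENNReal.ofReal (δ / 4) := by
    rw [laplace_Ici hb hT0]
    congr 1
    have h1 : -T / (2 / ε) = -Real.log (2 / δ) := by
      rw [hTdef]; field_simp
    rw [h1, Real.exp_neg, Real.exp_log (by positivity)]
    rw [show ((2:ℝ) / δ)⁻¹ = δ / 2 by field_simp]
    ring
  have huniv : laplace (2 / ε) Set.univ = 1 := laplace_univ hb
  rw [Measure.map_apply hf hS, Measure.dirac_apply' _ hS]
  set f : ℝ → ℝ := fun z => if T + 1 ≤ 1 + z then 1 + z else 0 with hfdef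
  by_cases h0 : (0:ℝ) ∈ S
  · have hd : S.indicator (1 : ℝ → ENNReal) 0 = 1 := Set.indicator_of_mem h0 _
    rw [hd]
    constructor
    · have hsub : Set.Iio T ⊆ f ⁻¹' S := by
        intro z hz
        have hz' : ¬ (T + 1 ≤ 1 + z) := by simp only [Set.mem_Iio] at hz; linarith
        simp only [Set.mem_preimage, hfdef, if_neg hz']
        exact h0
      have hpart : laplace (2 / ε) (Set.Iio T) + laplace (2 / ε) (Set.Ici T) = 1 := by
        rw [← measure_union (Set.Iio_disjoint_Ici le_rfl) measurableSet_Ici,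
          Set.Iio_union_Ici]
        exact huniv
      calc (1:ENNReal) = laplace (2 / ε) (Set.Iio T) + laplace (2 / ε) (Set.Ici T) :=
            hpart.symm
        _ ≤ laplace (2 / ε) (f ⁻¹' S) + ENNReal.ofReal (δ / 2) := by
            refine add_le_add (measure_mono hsub) ?_
            rw [hIci]
            exact ENNReal.ofReal_le_ofReal (by linarith)
    · have h1 : laplace (2 / ε) (f ⁻¹' S) ≤ 1 := by
        rw [← huniv]; exact measure_mono (Set.subset_univ _)
      exact h1.trans le_self_add
  · have hd : S.indicator (1 : ℝ → ENNReal) 0 = 0 := Set.indicator_of_notMem h0 _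
    rw [hd]
    refine ⟨zero_le, ?_⟩
    have hsub : f ⁻¹' S ⊆ Set.Ici T := by
      intro z hz
      simp only [Set.mem_preimage, hfdef] at hz
      by_contra hzT
      have hz' : ¬ (T + 1 ≤ 1 + z) := by
        simp only [Set.mem_Ici, not_le] at hzT; linarith
      rw [if_neg hz'] at hz
      exact h0 hz
    calc laplace (2 / ε) (f ⁻¹' S) ≤ laplace (2 / ε) (Set.Ici T) := measure_mono hsub
      _ = ENNReal.ofReal (δ / 4) := hIci
      _ ≤ 0 + ENNReal.ofReal (δ / 2) := by
          rw [zero_add]; exact ENNReal.ofReal_le_ofReal (by linarith)
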